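/- Suppose each state sequence τ_i fulfils exactly one criterion at each index (fixed per-state criteria). Then a flow diagram in which each τ_i's segmentation appears as an s–t path exists with λ interior nodes if and only if the string of per-index criteria of every τ_i, after collapsing consecutive equal characters, is a subsequence of some common supersequence of length λ realizable as a topological order of the diagram's interior nodes; in particular the minimum λ equals the shortest common supersequence length of the run-length-collapsed criterion strings. -/

import Mathlib

structure FlowDiagram (C : Type*) where
  numInterior : ℕ
  label : Fin numInterior → C
  edge : Fin numInterior → Fin numInterior → Prop
  edge_lt : ∀ i j, edge i j → i < j
  src : Fin numInterior → Prop
  snk : Fin numInterior → Prop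
  stEdge : Prop

/-- The string `r` appears as the label sequence of an `s`–`t` path of `F`. -/
def FlowDiagram.Represents {C : Type*} (F : FlowDiagram C) (r : List C) : Prop :=
  ∃ p : List (Fin F.numInterior),
    List.Chain' F.edge p ∧ p.map F.label = r ∧
    (∀ x ∈ p.head?, F.src x) ∧ (∀ x ∈ p.getLast?, F.snk x) ∧
    (p = [] → F.stEdge)

/-- `IsSegString s c`: `s` is the criterion string of some segmentation of the per-index
criterion string `c`, i.e. `c` splits into nonempty constant blocks whose values, in
order, form `s`.  (Under fixed criteria a segment fulfils `C` iff all its states do.) -/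
def IsSegString {α : Type*} (s c : List α) : Prop :=
  ∃ blocks : List (List α), blocks.flatten = c ∧
    (∀ b ∈ blocks, b ≠ [] ∧ ∃ a, ∀ x ∈ b, x = a) ∧
    s = blocks.filterMap List.head?

open List

lemma destutter'_append_const {α} [DecidableEq α] (x : α) (b l : List α)
    (hb : ∀ y ∈ b, y = x) :
    (b ++ l).destutter' (· ≠ ·) x = l.destutter' (· ≠ ·) x := by
  induction b with
  | nil => rfl
  | cons y b ih =>
      have hy : y = x := hb y (by simp)
      subst hy
      rw [cons_append, destutter'_cons, if_neg (by simp)]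
      exact ih fun z hz => hb z (by simp [hz])

lemma destutter'_flatten_eq {α} [DecidableEq α] (blocks : List (List α))
    (h : ∀ b ∈ blocks, b ≠ [] ∧ ∃ a, ∀ x ∈ b, x = a) :
    ∀ a : α, (blocks.flatten).destutter' (· ≠ ·) a
      = (blocks.filterMap List.head?).destutter' (· ≠ ·) a := by
  induction blocks with
  | nil => intro a; rfl
  | cons b bs ih =>
      intro a
      obtain ⟨hne, x, hx⟩ := h b (by simp)
      obtain ⟨y, b', rfl⟩ := List.exists_cons_of_ne_nil hne
      have hb' : ∀ z ∈ b', z = y := fun z hz =>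
        (hx z (by simp [hz])).trans (hx y (by simp)).symm
      have hih := ih (fun c hc => h c (by simp [hc]))
      simp only [flatten_cons, filterMap_cons, head?_cons, cons_append]
      by_cases hay : a ≠ y
      · rw [destutter'_cons, if_pos hay, destutter'_append_const y b' _ hb',
          hih y, destutter'_cons, if_pos hay]
      · push_neg at hay; subst hay
        rw [destutter'_cons, if_neg (by simp), destutter'_append_const a b' _ hb',
          hih a, destutter'_cons, if_neg (by simp)]

lemma destutter_eq_of_seg {α} [DecidableEq α] {s c : List α} (h : IsSegString s c) :
    c.destutter (· ≠ ·) = s.destutter (· ≠ ·) := by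
  obtain ⟨blocks, hflat, hconst, hs⟩ := h
  subst hflat; subst hs
  cases blocks with
  | nil => simp
  | cons b bs =>
      obtain ⟨hne, x, hx⟩ := hconst b (by simp)
      obtain ⟨y, b', rfl⟩ := List.exists_cons_of_ne_nil hne
      have hb' : ∀ z ∈ b', z = y := fun z hz =>
        (hx z (by simp [hz])).trans (hx y (by simp)).symm
      simp only [flatten_cons, filterMap_cons, head?_cons, cons_append,
        destutter_cons']
      rw [destutter'_append_const y b' _ hb',
        destutter'_flatten_eq bs (fun c hc => hconst c (by simp [hc])) y]

/-- The maximal-run segmentation: the destuttered string is a seg string. -/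
lemma isSegString_destutter {α} [DecidableEq α] (c : List α) :
    IsSegString (c.destutter (· ≠ ·)) c := by
  suffices h : ∀ (a : α) (l : List α), ∃ blocks : List (List α),
      blocks.flatten = a :: l ∧
      (∀ b ∈ blocks, b ≠ [] ∧ ∃ x, ∀ y ∈ b, y = x) ∧
      l.destutter' (· ≠ ·) a = blocks.filterMap List.head? by
    cases c with
    | nil => exact ⟨[], by simp⟩
    | cons a l =>
        obtain ⟨blocks, h1, h2, h3⟩ := h a l
        exact ⟨blocks, h1, h2, by rw [destutter_cons', h3]⟩
  intro a l
  induction l generalizing a with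
  | nil => exact ⟨[[a]], by simp⟩
  | cons b l ih =>
      by_cases hab : a ≠ b
      · obtain ⟨blocks, h1, h2, h3⟩ := ih b
        refine ⟨[a] :: blocks, by simp [h1], ?_, ?_⟩
        · intro c hc
          rcases mem_cons.mp hc with rfl | hc
          · exact ⟨by simp, a, by simp⟩
          · exact h2 c hc
        · rw [destutter'_cons, if_pos hab, h3]; simp
      · push_neg at hab; subst hab
        obtain ⟨blocks, h1, h2, h3⟩ := ih a
        rw [destutter'_cons, if_neg (by simp)]
        cases blocks with
        | nil => simp at h1
        | cons b0 bs =>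
            obtain ⟨hne0, x0, hx0⟩ := h2 b0 (by simp)
            obtain ⟨y0, b0', rfl⟩ := List.exists_cons_of_ne_nil hne0
            simp only [flatten_cons, cons_append, List.cons.injEq] at h1
            obtain ⟨h1a, h1'⟩ := h1
            subst h1a
            refine ⟨(y0 :: y0 :: b0') :: bs, by simp [h1'], ?_, ?_⟩
            · intro c hc
              rcases mem_cons.mp hc with rfl | hc
              · refine ⟨by simp, x0, ?_⟩
                have ha0 : y0 = x0 := hx0 y0 (by simp)
                intro y hy
                rcases mem_cons.mp hy with rfl | hy
                · exact ha0
                · rcases mem_cons.mp hy with rfl | hy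
                  · exact ha0
                  · exact hx0 y (by simp [hy])
              · exact h2 c (by simp [hc])
            · rw [h3]; simp

/-- A strictly increasing list of `Fin n` is a sublist of `finRange n`. -/
lemma sublist_finRange_of_pairwise {n : ℕ} {p : List (Fin n)}
    (hp : p.Pairwise (· < ·)) : p <+ List.finRange n := by
  refine List.sublist_of_subperm_of_pairwise (r := (· ≤ ·)) ?_
    (hp.imp le_of_lt) ((pairwise_lt_finRange n).imp le_of_lt)
  exact List.subperm_of_subset hp.nodup (fun x _ => List.mem_finRange x)

/-- with fixed criteria (each state of `τ_i` fulfils exactly the criterion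
`cs i` at its index), a flow diagram with `lam` interior nodes representing a
segmentation of every `τ_i` exists iff there is a common supersequence `w` of length
`lam` of the run-length-collapsed criterion strings (realized as the topological order
of the diagram's interior nodes); in particular the minimum `lam` equals the shortest
common supersequence length of the collapsed strings. -/
theorem stmt_13 (m k : ℕ) (cs : Fin m → List (Fin k)) :
    (∀ lam : ℕ,
      (∃ F : FlowDiagram (Fin k), F.numInterior = lam ∧
        ∀ i, ∃ s, IsSegString s (cs i) ∧ F.Represents s) ↔
      (∃ w : List (Fin k), w.length = lam ∧
        ∀ i, ((cs i).destutter (· ≠ ·)).Sublist w)) ∧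
    (∀ L : ℕ,
      IsLeast {lam : ℕ | ∃ F : FlowDiagram (Fin k), F.numInterior = lam ∧
        ∀ i, ∃ s, IsSegString s (cs i) ∧ F.Represents s} L ↔
      IsLeast {lam : ℕ | ∃ w : List (Fin k), w.length = lam ∧
        ∀ i, ((cs i).destutter (· ≠ ·)).Sublist w} L) := by
  have main : ∀ lam : ℕ,
      (∃ F : FlowDiagram (Fin k), F.numInterior = lam ∧
        ∀ i, ∃ s, IsSegString s (cs i) ∧ F.Represents s) ↔
      (∃ w : List (Fin k), w.length = lam ∧
        ∀ i, ((cs i).destutter (· ≠ ·)).Sublist w) := by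
    intro lam
    constructor
    · rintro ⟨F, rfl, hF⟩
      refine ⟨(List.finRange F.numInterior).map F.label, by simp, fun i => ?_⟩
      obtain ⟨s, hseg, p, hchain, hmap, -, -, -⟩ := hF i
      have hsub : s <+ (List.finRange F.numInterior).map F.label := by
        rw [← hmap]
        refine List.Sublist.map F.label ?_
        refine sublist_finRange_of_pairwise ?_
        rw [← List.isChain_iff_pairwise]
        exact hchain.imp F.edge_lt
      calc ((cs i).destutter (· ≠ ·)) = s.destutter (· ≠ ·) :=
              destutter_eq_of_seg hseg
        _ <+ s := List.destutter_sublist _ s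
        _ <+ _ := hsub
    · rintro ⟨w, rfl, hw⟩
      refine ⟨⟨w.length, w.get, (· < ·), fun _ _ h => h,
        fun _ => True, fun _ => True, True⟩, rfl, fun i => ?_⟩
      refine ⟨(cs i).destutter (· ≠ ·), isSegString_destutter _, ?_⟩
      have hsub : (cs i).destutter (· ≠ ·) <+
          (List.finRange w.length).map w.get := by
        rw [List.map_get_finRange]; exact hw i
      obtain ⟨p, hp, hmap⟩ := List.sublist_map_iff.mp hsub
      refine ⟨p, ?_, hmap.symm, by simp, by simp, fun _ => trivial⟩
      refine List.isChain_iff_pairwise.mpr ?_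
      exact (pairwise_lt_finRange _).sublist hp
  refine ⟨main, fun L => ?_⟩
  have hset : {lam : ℕ | ∃ F : FlowDiagram (Fin k), F.numInterior = lam ∧
        ∀ i, ∃ s, IsSegString s (cs i) ∧ F.Represents s}
      = {lam : ℕ | ∃ w : List (Fin k), w.length = lam ∧
        ∀ i, ((cs i).destutter (· ≠ ·)).Sublist w} := Set.ext fun lam => main lam
  rw [hset]
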